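/- arXiv:1701.07811 — 2 statements merged into one kernel-verified Lean document; each statement's English description precedes it below -/
import Mathlib

section
/- If G is a finite simple graph without isolated vertices, then the total domination number of G is at least the sub-total domination number of G, i.e., γ_t(G) ≥ sub_t(G). -/
open Finset

/-- The sum of the degrees of the vertices in `S`. -/
noncomputable def degSum {V : Type*} (G : SimpleGraph V) (S : Finset V) : ℕ :=
  ∑ v ∈ S, (G.neighborSet v).ncard

/-- The sub-total domination number: the smallest `k` such that the sum of the `k` largest
degrees (equivalently, the largest degree sum over a `k`-subset of vertices) is at least `n`. -/
noncomputable def subt {V : Type*} (G : SimpleGraph V) [Fintype V] : ℕ :=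
  sInf {k | ∃ S : Finset V, S.card = k ∧ Fintype.card V ≤ degSum G S}

/-- The total domination number. -/
noncomputable def totalDomNum {V : Type*} (G : SimpleGraph V) [Fintype V] : ℕ :=
  sInf {k | ∃ S : Finset V, S.card = k ∧ ∀ v : V, ∃ u ∈ S, G.Adj v u}

/-- The maximum degree. -/
noncomputable def maxDeg {V : Type*} (G : SimpleGraph V) : ℕ :=
  ⨆ v, (G.neighborSet v).ncard

theorem stmt_0 {V : Type*} [Fintype V] (G : SimpleGraph V)
    (hfree : ∀ v : V, ∃ u : V, G.Adj v u) :
    subt G ≤ totalDomNum G := by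
  classical
  have hne : {k | ∃ S : Finset V, S.card = k ∧ ∀ v : V, ∃ u ∈ S, G.Adj v u}.Nonempty := by
    refine ⟨(univ : Finset V).card, univ, rfl, fun v => ?_⟩
    obtain ⟨u, hu⟩ := hfree v
    exact ⟨u, mem_univ u, hu⟩
  obtain ⟨S, hScard, hSdom⟩ := Nat.sInf_mem hne
  apply Nat.sInf_le
  refine ⟨S, hScard, ?_⟩
  have hsub : (univ : Finset V) ⊆ S.biUnion (fun u => G.neighborFinset u) := by
    intro v _
    obtain ⟨u, huS, hadj⟩ := hSdom v
    exact mem_biUnion.mpr ⟨u, huS, (G.mem_neighborFinset u v).mpr hadj.symm⟩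
  calc Fintype.card V = (univ : Finset V).card := rfl
    _ ≤ (S.biUnion (fun u => G.neighborFinset u)).card := card_le_card hsub
    _ ≤ ∑ u ∈ S, (G.neighborFinset u).card := card_biUnion_le
    _ = degSum G S := by
        unfold degSum
        refine Finset.sum_congr rfl fun u _ => ?_
        rw [G.neighborFinset_def, Set.ncard_eq_toFinset_card']
end

section
/- If G and H are disjoint isolate-free graphs, then sub_t(G) + sub_t(H) ≥ sub_t(G ∪ H), where G ∪ H denotes the disjoint union of G and H. -/
open Finset

lemma neighborSet_sum_inl {V W : Type*} (G : SimpleGraph V) (H : SimpleGraph W) (v : V) :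
    (G ⊕g H).neighborSet (Sum.inl v) = Sum.inl '' G.neighborSet v := by
  ext x; cases x <;> simp [SimpleGraph.neighborSet]

lemma neighborSet_sum_inr {V W : Type*} (G : SimpleGraph V) (H : SimpleGraph W) (w : W) :
    (G ⊕g H).neighborSet (Sum.inr w) = Sum.inr '' H.neighborSet w := by
  ext x; cases x <;> simp [SimpleGraph.neighborSet]

lemma mem_subt_set {V : Type*} [Fintype V] (G : SimpleGraph V)
    (hG : ∀ v : V, ∃ u : V, G.Adj v u) :
    {k | ∃ S : Finset V, S.card = k ∧ Fintype.card V ≤ degSum G S}.Nonempty := by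
  refine ⟨Fintype.card V, Finset.univ, Finset.card_univ, ?_⟩
  have : ∀ v : V, 1 ≤ (G.neighborSet v).ncard := by
    intro v
    have : (G.neighborSet v).Nonempty := by
      obtain ⟨u, hu⟩ := hG v; exact ⟨u, hu⟩
    exact (Set.ncard_pos (Set.toFinite _)).mpr this
  calc Fintype.card V = ∑ _v : V, 1 := by simp
    _ ≤ degSum G Finset.univ := Finset.sum_le_sum fun v _ => this v

theorem stmt_8 {V W : Type*} [Fintype V] [Fintype W]
    (G : SimpleGraph V) (H : SimpleGraph W)
    (hG : ∀ v : V, ∃ u : V, G.Adj v u) (hH : ∀ v : W, ∃ u : W, H.Adj v u) :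
    subt (G ⊕g H) ≤ subt G + subt H := by
  obtain ⟨S, hScard, hSdeg⟩ := Nat.sInf_mem (mem_subt_set G hG)
  obtain ⟨T, hTcard, hTdeg⟩ := Nat.sInf_mem (mem_subt_set H hH)
  apply Nat.sInf_le
  have hdisj : Disjoint (S.map ⟨Sum.inl, Sum.inl_injective⟩)
      (T.map ⟨Sum.inr, Sum.inr_injective⟩) := by
    simp [Finset.disjoint_left]
  refine ⟨(S.map ⟨Sum.inl, Sum.inl_injective⟩).disjUnion
    (T.map ⟨Sum.inr, Sum.inr_injective⟩) hdisj, ?_, ?_⟩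
  · rw [Finset.card_disjUnion, Finset.card_map, Finset.card_map, hScard, hTcard]; rfl
  · rw [degSum, Finset.sum_disjUnion hdisj,
      Finset.sum_map, Finset.sum_map, Fintype.card_sum]
    simp only [Function.Embedding.coeFn_mk, neighborSet_sum_inl, neighborSet_sum_inr,
      Set.ncard_image_of_injective _ Sum.inl_injective,
      Set.ncard_image_of_injective _ Sum.inr_injective]
    exact Nat.add_le_add hSdeg hTdeg
end
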